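/- Let F = F_q be a finite field with q ≥ 4, let R = F_q[[π]] (or any complete DVR with residue field F_q), and let H be a closed subgroup of GL₂(R). If det(H) = R^×, the image of H in GL₂(F_q) under reduction mod π is all of GL₂(F_q), and the image of H ∩ (Id + π·M₂(R)) in (Id + π·M₂(R))/(Id + π²·M₂(R)) contains a non-scalar element, then H = GL₂(R). -/

import Mathlib

open PowerSeries

namespace PR
variable {F : Type*} [Field F]

local notation "R" => PowerSeries F
local notation "M2" => Matrix (Fin 2) (Fin 2)

/-- congruence mod X^n on matrices -/
def Emod (n : ℕ) (A B : M2 R) : Prop := ∃ D : M2 R, A = B + (X : R)^n • D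

theorem Emod.refl (n : ℕ) (A : M2 R) : Emod n A A := ⟨0, by simp⟩

theorem Emod.symm {n : ℕ} {A B : M2 R} (h : Emod n A B) : Emod n B A := by
  obtain ⟨D, rfl⟩ := h; exact ⟨-D, by simp⟩

theorem Emod.trans {n : ℕ} {A B C : M2 R} (h : Emod n A B) (h' : Emod n B C) :
    Emod n A C := by
  obtain ⟨D, rfl⟩ := h; obtain ⟨D', rfl⟩ := h'
  exact ⟨D' + D, by rw [smul_add]; abel⟩

theorem Emod.add {n : ℕ} {A B A' B' : M2 R} (h : Emod n A B) (h' : Emod n A' B') :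
    Emod n (A + A') (B + B') := by
  obtain ⟨D, rfl⟩ := h; obtain ⟨D', rfl⟩ := h'
  exact ⟨D + D', by rw [smul_add]; abel⟩

theorem Emod.mul {n : ℕ} {A B A' B' : M2 R} (h : Emod n A B) (h' : Emod n A' B') :
    Emod n (A * A') (B * B') := by
  obtain ⟨D, rfl⟩ := h; obtain ⟨D', rfl⟩ := h'
  refine ⟨D * B' + B * D' + (X:R)^n • (D * D'), ?_⟩
  simp only [add_mul, mul_add, smul_add, smul_mul_assoc, mul_smul_comm, smul_smul]
  abel

theorem Emod.of_le {n m : ℕ} (hm : m ≤ n) {A B : M2 R} (h : Emod n A B) : Emod m A B := by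
  obtain ⟨D, rfl⟩ := h
  exact ⟨(X:R)^(n-m) • D, by rw [smul_smul, ← pow_add, Nat.add_sub_cancel' hm]⟩

theorem Emod.shift {n m : ℕ} {U V : M2 R} (h : Emod m U V) (W : M2 R) :
    Emod (n + m) (W + (X:R)^n • U) (W + (X:R)^n • V) := by
  obtain ⟨D, rfl⟩ := h
  exact ⟨D, by rw [smul_add, smul_smul, ← pow_add, add_assoc]⟩

theorem emod_iff_dvd {n : ℕ} {A B : M2 R} :
    Emod n A B ↔ ∀ i j : Fin 2, (X : R)^n ∣ (A i j - B i j) := by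
  constructor
  · rintro ⟨D, rfl⟩ i j
    exact ⟨D i j, by simp [Matrix.add_apply, Matrix.smul_apply, smul_eq_mul]⟩
  · intro h
    refine ⟨Matrix.of fun i j => (h i j).choose, Matrix.ext fun i j => ?_⟩
    simp only [Matrix.add_apply, Matrix.smul_apply, Matrix.of_apply, smul_eq_mul]
    linear_combination (h i j).choose_spec

/-- reduction mod X, entrywise -/
noncomputable def rd : M2 R →+* M2 F := ((@constantCoeff F _)).mapMatrix
/-- lift, entrywise -/
noncomputable def lf : M2 F →+* M2 R := (@C F _).mapMatrix

@[simp] theorem rd_lf (B : M2 F) : rd (lf B) = B := by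
  ext i j; simp [rd, lf]

theorem rd_apply (A : M2 R) (i j : Fin 2) : rd A i j = (@constantCoeff F _) (A i j) := rfl
theorem lf_apply (B : M2 F) (i j : Fin 2) : lf B i j = (@C F _) (B i j) := rfl

theorem emod_one_iff {A B : M2 R} : Emod 1 A B ↔ rd A = rd B := by
  rw [emod_iff_dvd]
  constructor
  · intro h; ext i j
    have h2 := h i j
    rw [pow_one, PowerSeries.X_dvd_iff, map_sub] at h2
    rw [rd_apply, rd_apply]; linear_combination h2
  · intro h i j
    rw [pow_one, PowerSeries.X_dvd_iff, map_sub]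
    have : rd A i j = rd B i j := by rw [h]
    rw [rd_apply, rd_apply] at this
    rw [this]; ring

theorem rd_one : rd (1 : M2 R) = 1 := map_one (rd (F:=F))

/-- reduction of the inverse of a GL element -/
theorem rd_inv {h : GL (Fin 2) R} {N : GL (Fin 2) F}
    (hh : rd (h : M2 R) = (N : M2 F)) :
    rd ((h⁻¹ : GL (Fin 2) R) : M2 R) = ((N⁻¹ : GL (Fin 2) F) : M2 F) := by
  have h1 : rd ((h⁻¹ : GL (Fin 2) R) : M2 R) * (N : M2 F) = 1 := by
    rw [← hh, ← map_mul, h.inv_mul, rd_one]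
  calc rd ((h⁻¹ : GL (Fin 2) R) : M2 R)
      = rd ((h⁻¹ : GL (Fin 2) R) : M2 R) * ((N : M2 F) * ((N⁻¹ : GL (Fin 2) F) : M2 F)) := by
        rw [N.mul_inv, mul_one]
    _ = ((N⁻¹ : GL (Fin 2) F) : M2 F) := by rw [← mul_assoc, h1, one_mul]

/-- inverses respect Emod -/
theorem Emod.inv {n : ℕ} {h g : GL (Fin 2) R}
    (hh : Emod n (h : M2 R) (g : M2 R)) :
    Emod n ((h⁻¹ : GL (Fin 2) R) : M2 R) ((g⁻¹ : GL (Fin 2) R) : M2 R) := by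
  obtain ⟨D, hD⟩ := hh.symm
  refine ⟨((h⁻¹ : GL (Fin 2) R) : M2 R) * D * ((g⁻¹ : GL (Fin 2) R) : M2 R), ?_⟩
  have key : ((h⁻¹ : GL (Fin 2) R) : M2 R) - ((g⁻¹ : GL (Fin 2) R) : M2 R)
      = ((h⁻¹ : GL (Fin 2) R) : M2 R) * ((g : M2 R) - (h : M2 R)) * ((g⁻¹ : GL (Fin 2) R) : M2 R) := by
    rw [mul_sub, sub_mul, mul_assoc _ (g : M2 R) _, g.mul_inv, mul_one, h.inv_mul, one_mul]
  have : (g : M2 R) - (h : M2 R) = (X:R)^n • D := by rw [hD]; abel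
  rw [this] at key
  have : ((h⁻¹ : GL (Fin 2) R) : M2 R) * ((X:R)^n • D) * ((g⁻¹ : GL (Fin 2) R) : M2 R)
      = (X:R)^n • (((h⁻¹ : GL (Fin 2) R) : M2 R) * D * ((g⁻¹ : GL (Fin 2) R) : M2 R)) := by
    rw [mul_smul_comm, smul_mul_assoc]
  rw [this] at key
  exact sub_eq_iff_eq_add'.mp key

set_option linter.unusedSectionVars false


theorem exists_notMem [Fintype F] (s : Finset F) (h : s.card < Fintype.card F) :
    ∃ u : F, u ∉ s := by
  by_contra hc
  push_neg at hc
  have : (Finset.univ : Finset F) ⊆ s := fun u _ => hc u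
  have := Finset.card_le_card this
  simp [Finset.card_univ] at this
  omega

/-- build a GL₂ element from explicit matrices -/
def mkGL (A B : M2 F) (h1 : A * B = 1) (h2 : B * A = 1) : GL (Fin 2) F := ⟨A, B, h1, h2⟩

@[simp] theorem mkGL_val (A B : M2 F) (h1 h2) : ((mkGL A B h1 h2 : GL (Fin 2) F) : M2 F) = A := rfl
@[simp] theorem mkGL_inv_val (A B : M2 F) (h1 h2) :
    (((mkGL A B h1 h2)⁻¹ : GL (Fin 2) F) : M2 F) = B := rfl

def upperU (t : F) : GL (Fin 2) F :=
  mkGL !![1,t;0,1] !![1,-t;0,1] (by norm_num [Matrix.mul_fin_two, ← Matrix.one_fin_two])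
    (by norm_num [Matrix.mul_fin_two, ← Matrix.one_fin_two])

def lowerU (t : F) : GL (Fin 2) F :=
  mkGL !![1,0;t,1] !![1,0;-t,1] (by norm_num [Matrix.mul_fin_two, ← Matrix.one_fin_two])
    (by norm_num [Matrix.mul_fin_two, ← Matrix.one_fin_two])

def diagU (u : F) (hu : u ≠ 0) : GL (Fin 2) F :=
  mkGL !![u,0;0,1] !![u⁻¹,0;0,1]
    (by simp [Matrix.mul_fin_two, ← Matrix.one_fin_two, hu])
    (by simp [Matrix.mul_fin_two, ← Matrix.one_fin_two, hu])

def dslU (u : F) (hu : u ≠ 0) : GL (Fin 2) F :=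
  mkGL !![u,0;0,u⁻¹] !![u⁻¹,0;0,u]
    (by simp [Matrix.mul_fin_two, ← Matrix.one_fin_two, hu])
    (by simp [Matrix.mul_fin_two, ← Matrix.one_fin_two, hu])

def wU : GL (Fin 2) F :=
  mkGL !![0,1;-1,0] !![0,-1;1,0] (by norm_num [Matrix.mul_fin_two, ← Matrix.one_fin_two])
    (by norm_num [Matrix.mul_fin_two, ← Matrix.one_fin_two])




theorem conj_diagU (l a b c d : F) (hl : l ≠ 0) :
    ((diagU l hl : GL (Fin 2) F) : M2 F) * !![a,b;c,d] * (((diagU l hl)⁻¹ : GL (Fin 2) F) : M2 F)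
      = !![a, l*b; l⁻¹*c, d] := by
  simp only [diagU, mkGL_val, mkGL_inv_val, Matrix.mul_fin_two]
  ext i j
  fin_cases i <;> fin_cases j <;> simp <;> field_simp <;> ring

theorem conj_upperU (t a b c d : F) :
    ((upperU t : GL (Fin 2) F) : M2 F) * !![a,b;c,d] * (((upperU t)⁻¹ : GL (Fin 2) F) : M2 F)
      = !![a + t*c, b + t*d - t*a - t^2*c; c, d - t*c] := by
  simp only [upperU, mkGL_val, mkGL_inv_val, Matrix.mul_fin_two]
  ext i j
  fin_cases i <;> fin_cases j <;> field_simp <;> ring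

theorem conj_lowerU (t a b c d : F) :
    ((lowerU t : GL (Fin 2) F) : M2 F) * !![a,b;c,d] * (((lowerU t)⁻¹ : GL (Fin 2) F) : M2 F)
      = !![a - t*b, b; c + t*a - t*d - t^2*b, d + t*b] := by
  simp only [lowerU, mkGL_val, mkGL_inv_val, Matrix.mul_fin_two]
  ext i j
  fin_cases i <;> fin_cases j <;> field_simp <;> ring

theorem conj_wU (a b c d : F) :
    ((wU : GL (Fin 2) F) : M2 F) * !![a,b;c,d] * (((wU)⁻¹ : GL (Fin 2) F) : M2 F)
      = !![d, -c; -b, a] := by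
  simp only [wU, mkGL_val, mkGL_inv_val, Matrix.mul_fin_two]
  ext i j
  fin_cases i <;> fin_cases j <;> field_simp <;> ring




theorem smul_one_eq (c : F) : c • (1 : M2 F) = !![c,0;0,c] := by
  rw [Matrix.one_fin_two]
  ext i j; fin_cases i <;> fin_cases j <;> simp

theorem nonscalar_entries {B : M2 F} (h : ¬∃ c : F, B = c • (1 : M2 F)) :
    B 0 1 ≠ 0 ∨ B 1 0 ≠ 0 ∨ B 0 0 ≠ B 1 1 := by
  by_contra hc
  push_neg at hc
  obtain ⟨h1, h2, h3⟩ := hc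
  refine h ⟨B 0 0, ?_⟩
  rw [smul_one_eq]
  conv_lhs => rw [Matrix.eta_fin_two B]
  rw [h1, h2, ← h3]

theorem exists_ne_zero_ne_one [Fintype F] (hq : 3 ≤ Fintype.card F) :
    ∃ l : F, l ≠ 0 ∧ l ≠ 1 := by
  letI := Classical.decEq F
  obtain ⟨l, hl⟩ := exists_notMem ({0, 1} : Finset F)
    (lt_of_le_of_lt (Finset.card_insert_le _ _) (by simp; omega))
  simp only [Finset.mem_insert, Finset.mem_singleton, not_or] at hl
  exact ⟨l, hl.1, hl.2⟩

/-- main sl₂-generation lemma -/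
theorem absl [Fintype F] (hq : 4 ≤ Fintype.card F) (P : M2 F → Prop)
    (hadd : ∀ {A B : M2 F}, P A → P B → P (A + B))
    (hneg : ∀ {A : M2 F}, P A → P (-A))
    (hconj : ∀ (N : GL (Fin 2) F) {B : M2 F}, P B →
      P ((N : M2 F) * B * ((N⁻¹ : GL (Fin 2) F) : M2 F)))
    (B₀ : M2 F) (hB₀ : P B₀) (hns : ¬∃ c : F, B₀ = c • (1 : M2 F)) :
    ∀ x y z : F, P !![x, y; z, -x] := by
  have hsub : ∀ {A B : M2 F}, P A → P B → P (A - B) := fun hA hB => by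
    rw [sub_eq_add_neg]; exact hadd hA (hneg hB)
  have hzero : P 0 := by have := hsub hB₀ hB₀; simpa using this
  -- a unit different from 1
  obtain ⟨l, hl0, hl1⟩ := exists_ne_zero_ne_one (F := F) (by omega)
  -- diagonal extraction: F1
  have F1 : ∀ W : M2 F, P W → P !![0, (l-1) * W 0 1; (l⁻¹-1) * W 1 0, 0] := by
    intro W hW
    have h1 := hconj (diagU l hl0) hW
    rw [Matrix.eta_fin_two W, conj_diagU _ _ _ _ _ hl0] at h1
    have h2 := hsub h1 (by rw [Matrix.eta_fin_two W] at hW; exact hW)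
    have : !![W 0 0, l * W 0 1; l⁻¹ * W 1 0, W 1 1] - !![W 0 0, W 0 1; W 1 0, W 1 1]
        = !![0, (l-1) * W 0 1; (l⁻¹-1) * W 1 0, 0] := by
      ext i j; fin_cases i <;> fin_cases j <;> simp <;> ring
    rwa [this] at h2
  -- unipotent extraction: F2
  have F2 : ∀ (W : M2 F) (t : F), P W →
      P !![t * W 1 0, t * W 1 1 - t * W 0 0 - t^2 * W 1 0; 0, -(t * W 1 0)] := by
    intro W t hW
    have h1 := hconj (upperU t) hW
    rw [Matrix.eta_fin_two W, conj_upperU] at h1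
    have h2 := hsub h1 (by rw [Matrix.eta_fin_two W] at hW; exact hW)
    have : !![W 0 0 + t * W 1 0, W 0 1 + t * W 1 1 - t * W 0 0 - t^2 * W 1 0; W 1 0, W 1 1 - t * W 1 0]
        - !![W 0 0, W 0 1; W 1 0, W 1 1]
        = !![t * W 1 0, t * W 1 1 - t * W 0 0 - t^2 * W 1 0; 0, -(t * W 1 0)] := by
      ext i j; fin_cases i <;> fin_cases j <;> simp <;> ring
    rwa [this] at h2
  -- Claim 1 : some nonzero s with P (s E₁₂)
  have claim1 : ∃ s : F, s ≠ 0 ∧ P !![0, s; 0, 0] := by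
    by_cases hcase : ∃ t : F, t * B₀ 1 1 - t * B₀ 0 0 - t^2 * B₀ 1 0 ≠ 0
    · obtain ⟨t, ht⟩ := hcase
      have h1 := F2 B₀ t hB₀
      have h2 := F1 _ h1
      have e : (!![0, (l - 1) * (!![t * B₀ 1 0, t * B₀ 1 1 - t * B₀ 0 0 - t ^ 2 * B₀ 1 0; 0,
            -(t * B₀ 1 0)] : M2 F) 0 1;
          (l⁻¹ - 1) * (!![t * B₀ 1 0, t * B₀ 1 1 - t * B₀ 0 0 - t ^ 2 * B₀ 1 0; 0,
            -(t * B₀ 1 0)] : M2 F) 1 0, 0] : M2 F)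
          = !![0, (l - 1) * (t * B₀ 1 1 - t * B₀ 0 0 - t^2 * B₀ 1 0); 0, 0] := by
        ext i j; fin_cases i <;> fin_cases j <;> simp
      rw [e] at h2
      exact ⟨_, mul_ne_zero (sub_ne_zero.mpr hl1) ht, h2⟩
    · push_neg at hcase
      have e1 := hcase 1
      have el := hcase l
      have hc0 : B₀ 1 0 = 0 := by
        have h1 : B₀ 1 1 - B₀ 0 0 = B₀ 1 0 := by linear_combination e1
        have h2 : l * (B₀ 1 1 - B₀ 0 0) = l^2 * B₀ 1 0 := by linear_combination el
        rw [h1] at h2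
        have h3 : l * B₀ 1 0 * (1 - l) = 0 := by linear_combination h2
        rcases mul_eq_zero.mp h3 with h' | h'
        · rcases mul_eq_zero.mp h' with h'' | h''
          · exact absurd h'' hl0
          · exact h''
        · exact absurd (by linear_combination -h') hl1
      have hda : B₀ 1 1 = B₀ 0 0 := by
        have h1 : B₀ 1 1 - B₀ 0 0 = B₀ 1 0 := by linear_combination e1
        rw [hc0] at h1; linear_combination h1
      have hb : B₀ 0 1 ≠ 0 := by
        rcases nonscalar_entries hns with h | h | h
        · exact h
        · exact absurd hc0 h
        · exact absurd hda h.symm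
      have h2 := F1 B₀ hB₀
      rw [hc0] at h2
      have e : (!![0, (l - 1) * B₀ 0 1; (l⁻¹ - 1) * 0, 0] : M2 F)
          = !![0, (l - 1) * B₀ 0 1; 0, 0] := by
        ext i j; fin_cases i <;> fin_cases j <;> simp
      rw [e] at h2
      exact ⟨_, mul_ne_zero (sub_ne_zero.mpr hl1) hb, h2⟩
  obtain ⟨s, hs0, hs⟩ := claim1
  -- Claim 2 : all multiples of E₁₂
  have claim2 : ∀ x : F, P !![0, x; 0, 0] := by
    intro x
    by_cases hx : x = 0
    · subst hx; convert hzero; ext i j; fin_cases i <;> fin_cases j <;> simp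
    · have hmu : x / s ≠ 0 := div_ne_zero hx hs0
      have h1 := hconj (diagU (x/s) hmu) hs
      rw [conj_diagU _ _ _ _ _ hmu] at h1
      have : x / s * s = x := div_mul_cancel₀ x hs0
      simpa [this] using h1
  -- Claim 3 : all multiples of E₂₁
  have claim3 : ∀ z : F, P !![0, 0; z, 0] := by
    intro z
    have h1 := hconj wU (claim2 (-z))
    rw [conj_wU] at h1
    simpa using h1
  -- Claim 4 : diagonal part
  have claim4 : ∀ x : F, P !![x, 0; 0, -x] := by
    intro x
    have h1 := hconj (lowerU 1) (claim2 (-x))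
    rw [conj_lowerU] at h1
    -- h1 : P !![0 - 1*(-x), -x; 0 + 0 - 0 - 1*(-x), 0 + 1*(-x)] = P !![x, -x; x, -x]
    have e : (!![0 - 1*(-x), -x; 0 + 1*0 - 1*0 - 1^2*(-x), 0 + 1*(-x)] : M2 F)
        = !![x, -x; x, -x] := by ext i j; fin_cases i <;> fin_cases j <;> simp <;> ring
    rw [e] at h1
    have h2 := hsub (hsub h1 (claim2 (-x))) (claim3 x)
    have e2 : (!![x, -x; x, -x] - !![0, -x; 0, 0] - !![0,0;x,0] : M2 F) = !![x,0;0,-x] := by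
      ext i j; fin_cases i <;> fin_cases j <;> simp
    rwa [e2] at h2
  intro x y z
  have := hadd (hadd (claim4 x) (claim2 y)) (claim3 z)
  have e : (!![x,0;0,-x] + !![0,y;0,0] + !![0,0;z,0] : M2 F) = !![x,y;z,-x] := by
    ext i j; fin_cases i <;> fin_cases j <;> simp
  rwa [e] at this

/-- non-scalar propagation under conjugation -/
theorem ns_lemma [Fintype F] (hq : 4 ≤ Fintype.card F) (B : M2 F)
    (hns : ¬∃ c : F, B = c • (1 : M2 F)) :
    ∃ N : GL (Fin 2) F, ¬∃ c : F,
      B - (N : M2 F) * B * ((N⁻¹ : GL (Fin 2) F) : M2 F) = c • (1 : M2 F) := by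
  obtain ⟨l, hl0, hl1⟩ := exists_ne_zero_ne_one (F := F) (by omega)
  by_cases hb : B 0 1 ≠ 0
  · refine ⟨diagU l hl0, ?_⟩
    rintro ⟨c, hc⟩
    rw [smul_one_eq] at hc
    conv_lhs at hc => rw [Matrix.eta_fin_two B]
    rw [conj_diagU _ _ _ _ _ hl0] at hc
    have h01 := congrFun (congrFun hc 0) 1
    simp at h01
    exact mul_ne_zero (sub_ne_zero.mpr (Ne.symm hl1)) hb (by linear_combination h01)
  by_cases hcl : B 1 0 ≠ 0
  · refine ⟨diagU l hl0, ?_⟩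
    rintro ⟨c, hc⟩
    rw [smul_one_eq] at hc
    conv_lhs at hc => rw [Matrix.eta_fin_two B]
    rw [conj_diagU _ _ _ _ _ hl0] at hc
    have h10 := congrFun (congrFun hc 1) 0
    simp at h10
    have hinv : (l : F)⁻¹ ≠ 1 := fun h' => hl1 (by
      have := congrArg (fun x => l * x) h'
      simpa [mul_inv_cancel₀ hl0] using this.symm)
    exact mul_ne_zero (sub_ne_zero.mpr (Ne.symm hinv)) hcl (by linear_combination h10)
  push_neg at hb hcl
  have had : B 0 0 ≠ B 1 1 := by
    rcases nonscalar_entries hns with h | h | h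
    · exact absurd hb h
    · exact absurd hcl h
    · exact h
  refine ⟨upperU 1, ?_⟩
  rintro ⟨c, hc⟩
  rw [smul_one_eq] at hc
  conv_lhs at hc => rw [Matrix.eta_fin_two B]
  rw [conj_upperU] at hc
  have h01 := congrFun (congrFun hc 0) 1
  simp [hcl] at h01
  exact had (by linear_combination h01)



def IsElem (g : GL (Fin 2) F) : Prop := (∃ t : F, g = upperU t) ∨ (∃ t : F, g = lowerU t)

theorem sl2_decomp (N : GL (Fin 2) F) (hdet : ((N : M2 F)).det = 1) :
    ∃ e1 e2 e3 e4 : GL (Fin 2) F,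
      IsElem e1 ∧ IsElem e2 ∧ IsElem e3 ∧ IsElem e4 ∧ N = e1 * e2 * e3 * e4 := by
  have hd : (N : M2 F) 0 0 * (N : M2 F) 1 1 - (N : M2 F) 0 1 * (N : M2 F) 1 0 = 1 := by
    rw [← Matrix.det_fin_two]; exact hdet
  by_cases hc : (N : M2 F) 1 0 ≠ 0
  · refine ⟨upperU (((N : M2 F) 0 0 - 1) / (N : M2 F) 1 0), lowerU ((N : M2 F) 1 0),
      upperU ((((N : M2 F) 1 1) - 1) / (N : M2 F) 1 0), upperU 0,
      Or.inl ⟨_, rfl⟩, Or.inr ⟨_, rfl⟩, Or.inl ⟨_, rfl⟩, Or.inl ⟨_, rfl⟩, ?_⟩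
    apply Units.ext
    show (N : M2 F) = ((upperU _ : GL (Fin 2) F) : M2 F) * _ * _ * _
    simp only [upperU, lowerU, mkGL_val, Units.val_mul, Matrix.mul_fin_two]
    conv_lhs => rw [Matrix.eta_fin_two (N : M2 F)]
    ext i j
    fin_cases i <;> fin_cases j <;> simp <;> field_simp <;> ring_nf <;>
      first | linear_combination hd | linear_combination -hd
  · push_neg at hc
    have ha : (N : M2 F) 0 0 ≠ 0 := by
      intro h0; rw [h0, hc] at hd; simp at hd
    refine ⟨lowerU (-1), upperU (((N : M2 F) 0 0 - 1) / (N : M2 F) 0 0),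
      lowerU ((N : M2 F) 0 0), upperU ((((N : M2 F) 0 1) + ((N : M2 F) 1 1) - 1) / (N : M2 F) 0 0),
      Or.inr ⟨_, rfl⟩, Or.inl ⟨_, rfl⟩, Or.inr ⟨_, rfl⟩, Or.inl ⟨_, rfl⟩, ?_⟩
    apply Units.ext
    show (N : M2 F) = _
    simp only [upperU, lowerU, mkGL_val, Units.val_mul, Matrix.mul_fin_two]
    conv_lhs => rw [Matrix.eta_fin_two (N : M2 F)]
    ext i j
    rw [hc] at hd ⊢
    fin_cases i <;> fin_cases j <;> simp <;> field_simp <;> ring_nf <;>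
      first | linear_combination hd | linear_combination -hd


theorem exists_sq_ne_one [Fintype F] (hq : 4 ≤ Fintype.card F) :
    ∃ u : F, u ≠ 0 ∧ u^2 ≠ 1 := by
  letI := Classical.decEq F
  have h3 : ({0,1,-1} : Finset F).card ≤ 3 := by
    refine (Finset.card_insert_le _ _).trans ?_
    have h4 := Finset.card_insert_le (1:F) ({-1} : Finset F)
    simp only [Finset.card_singleton] at h4
    omega
  obtain ⟨u, hu⟩ := exists_notMem ({0, 1, -1} : Finset F) (by omega)
  simp only [Finset.mem_insert, Finset.mem_singleton, not_or] at hu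
  obtain ⟨h0, h1, hm1⟩ := hu
  refine ⟨u, h0, fun hsq => ?_⟩
  have hz : (u-1)*(u+1) = 0 := by linear_combination hsq
  rcases mul_eq_zero.mp hz with h | h
  · exact h1 (by linear_combination h)
  · exact hm1 (by linear_combination h)

theorem conj_dsl_upper (u s : F) (hu : u ≠ 0) :
    (dslU u hu : GL (Fin 2) F) * upperU s * (dslU u hu)⁻¹ * (upperU s)⁻¹
      = upperU (u^2 * s - s) := by
  apply Units.ext
  simp only [upperU, dslU, Units.val_mul, mkGL_val, mkGL_inv_val, Matrix.mul_fin_two]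
  ext i j; fin_cases i <;> fin_cases j <;> simp <;> field_simp <;> ring

theorem conj_dsl_lower (u s : F) (hu : u ≠ 0) :
    (dslU u hu : GL (Fin 2) F) * lowerU s * (dslU u hu)⁻¹ * (lowerU s)⁻¹
      = lowerU (u⁻¹^2 * s - s) := by
  apply Units.ext
  simp only [lowerU, dslU, Units.val_mul, mkGL_val, mkGL_inv_val, Matrix.mul_fin_two]
  ext i j; fin_cases i <;> fin_cases j <;> simp <;> field_simp <;> ring

theorem elem_commutator [Fintype F] (hq : 4 ≤ Fintype.card F) (g : GL (Fin 2) F)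
    (hg : IsElem g) : ∃ x y : GL (Fin 2) F, g = x * y * x⁻¹ * y⁻¹ := by
  obtain ⟨u, hu0, hu1⟩ := exists_sq_ne_one (F := F) hq
  have h2 : u^2 - 1 ≠ 0 := sub_ne_zero.mpr hu1
  rcases hg with ⟨t, rfl⟩ | ⟨t, rfl⟩
  · refine ⟨dslU u hu0, upperU (t / (u^2 - 1)), ?_⟩
    rw [conj_dsl_upper]
    congr 1
    field_simp
  · have h2' : u⁻¹^2 - 1 ≠ 0 := by
      intro hcon
      have ha : u⁻¹^2 = 1 := by linear_combination hcon
      have hh : (u⁻¹*u)^2 = u^2 := by rw [mul_pow, ha, one_mul]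
      rw [inv_mul_cancel₀ hu0, one_pow] at hh
      exact hu1 hh.symm
    refine ⟨dslU u hu0, lowerU (t / (u⁻¹^2 - 1)), ?_⟩
    rw [conj_dsl_lower]
    congr 1
    have h3 : 1 - u^2 ≠ 0 := fun h => hu1 (by linear_combination -h)
    field_simp


-- ### Part 7: level machinery
variable [Fintype F]

/-- congruence class predicate: `h ≡ 1 + X^i B mod X^(i+1)` for some `h ∈ H` -/
def lvl (H : Subgroup (GL (Fin 2) R)) (i : ℕ) (B : M2 F) : Prop :=
  ∃ h ∈ H, Emod (i+1) ((h : GL (Fin 2) R) : M2 R) (1 + (X:R)^i • lf B)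

def lvlK (H : Subgroup (GL (Fin 2) R)) (i : ℕ) (B : M2 F) : Prop :=
  ∃ h ∈ H, (((h : GL (Fin 2) R) : M2 R)).det = 1 ∧
    Emod (i+1) ((h : GL (Fin 2) R) : M2 R) (1 + (X:R)^i • lf B)

theorem lvl_of_lvlK {H : Subgroup (GL (Fin 2) R)} {i : ℕ} {B : M2 F} (h : lvlK H i B) :
    lvl H i B := by obtain ⟨h, hH, _, hm⟩ := h; exact ⟨h, hH, hm⟩

/-- `1 + X^n • D ≡ 1 + X^n • lf (rd D) mod X^(n+1)` -/
theorem emod_smul_rd (n : ℕ) (D : M2 R) :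
    Emod (n+1) (1 + (X:R)^n • D) (1 + (X:R)^n • lf (rd D)) := by
  have h1 : Emod 1 D (lf (rd D)) := by rw [emod_one_iff, rd_lf]
  exact h1.shift 1

theorem mul_expand (j : ℕ) (D D' : M2 R) :
    (1 + (X:R)^j • D) * (1 + (X:R)^j • D')
      = 1 + (X:R)^j • (D + D') + ((X:R)^j * (X:R)^j) • (D * D') := by
  simp only [mul_add, add_mul, one_mul, mul_one, smul_add, smul_mul_assoc,
    mul_smul_comm, smul_smul]
  abel

theorem one_add_mul_expand {j : ℕ} (hj : 1 ≤ j) (D D' : M2 R) :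
    Emod (j+1) ((1 + (X:R)^j • D) * (1 + (X:R)^j • D')) (1 + (X:R)^j • (D + D')) := by
  refine ⟨(X:R)^(j-1) • (D * D'), ?_⟩
  rw [mul_expand]
  have hp : (X:R)^j * (X:R)^j = (X:R)^(j+1) * (X:R)^(j-1) := by
    rw [← pow_add, ← pow_add]; congr 1; omega
  rw [hp, ← smul_smul]

theorem emod_one_add_high {j : ℕ} {S : M2 R} (h : Emod 1 S 0) :
    Emod (j+1) (1 + (X:R)^j • S) 1 := by
  obtain ⟨E, hE⟩ := h
  rw [zero_add, pow_one] at hE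
  refine ⟨E, ?_⟩
  rw [hE, smul_smul, ← pow_succ]

theorem det_val_inv {h : GL (Fin 2) R} (hd : ((h : M2 R)).det = 1) :
    (((h⁻¹ : GL (Fin 2) R)) : M2 R).det = 1 := by
  have h1 := congrArg Matrix.det (h.mul_inv)
  rw [Matrix.det_mul, Matrix.det_one, hd, one_mul] at h1
  exact h1

theorem det_commutator (x y : GL (Fin 2) R) :
    (((x * y * x⁻¹ * y⁻¹ : GL (Fin 2) R)) : M2 R).det = 1 := by
  have h1 := congrArg Matrix.det (x.mul_inv)
  rw [Matrix.det_mul, Matrix.det_one] at h1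
  have h2 := congrArg Matrix.det (y.mul_inv)
  rw [Matrix.det_mul, Matrix.det_one] at h2
  show ((x * y * x⁻¹ * y⁻¹ : GL (Fin 2) R) : M2 R).det = 1
  rw [Units.val_mul, Units.val_mul, Units.val_mul, Matrix.det_mul, Matrix.det_mul,
    Matrix.det_mul]
  linear_combination (((y : M2 R)).det * (((y⁻¹ : GL (Fin 2) R)) : M2 R).det) * h1 + h2

noncomputable def mapGL : GL (Fin 2) R →* GL (Fin 2) F :=
  Units.map (rd (F:=F)).toMonoidHom

@[simp] theorem mapGL_val (h : GL (Fin 2) R) :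
    ((mapGL h : GL (Fin 2) F) : M2 F) = rd ((h : M2 R)) := rfl

theorem lvlK_one {H : Subgroup (GL (Fin 2) R)} {i : ℕ} : lvlK H i 0 := by
  refine ⟨1, H.one_mem, by simp, ⟨0, by simp⟩⟩

theorem lvlK_add {H : Subgroup (GL (Fin 2) R)} {i : ℕ} (hi : 1 ≤ i) {B B' : M2 F}
    (h : lvlK H i B) (h' : lvlK H i B') : lvlK H i (B + B') := by
  obtain ⟨h, hH, hd, hm⟩ := h
  obtain ⟨h', hH', hd', hm'⟩ := h'
  refine ⟨h * h', H.mul_mem hH hH', ?_, ?_⟩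
  · rw [Units.val_mul, Matrix.det_mul, hd, hd', one_mul]
  · have h1 : Emod (i+1) ((h * h' : GL (Fin 2) R) : M2 R)
        ((1 + (X:R)^i • lf B) * (1 + (X:R)^i • lf B')) := by
      rw [Units.val_mul]; exact hm.mul hm'
    refine h1.trans ?_
    have := one_add_mul_expand hi (lf B) (lf B')
    rwa [← map_add] at this

theorem lvlK_neg {H : Subgroup (GL (Fin 2) R)} {i : ℕ} (hi : 1 ≤ i) {B : M2 F}
    (h : lvlK H i B) : lvlK H i (-B) := by
  obtain ⟨h, hH, hd, hm⟩ := h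
  refine ⟨h⁻¹, H.inv_mem hH, det_val_inv hd, ?_⟩
  have e1 : Emod (i+1) ((h : M2 R) * (1 + (X:R)^i • lf (-B))) 1 := by
    have h2 := hm.mul (Emod.refl (i+1) (1 + (X:R)^i • lf (-B)))
    refine h2.trans ?_
    refine (one_add_mul_expand hi (lf B) (lf (-B))).trans ?_
    have heq : lf B + lf (-B) = (0 : M2 R) := by rw [map_neg, add_neg_cancel]
    rw [heq]
    exact ⟨0, by simp⟩
  have e2 := (Emod.refl (i+1) ((h⁻¹ : GL (Fin 2) R) : M2 R)).mul e1
  rw [mul_one, ← mul_assoc, h.inv_mul, one_mul] at e2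
  exact e2.symm

theorem lvlK_conj {H : Subgroup (GL (Fin 2) R)} {i : ℕ}
    (hred' : ∀ N : GL (Fin 2) F, ∃ a ∈ H, rd ((a : GL (Fin 2) R) : M2 R) = (N : M2 F))
    (N : GL (Fin 2) F) {B : M2 F} (h : lvlK H i B) :
    lvlK H i ((N : M2 F) * B * ((N⁻¹ : GL (Fin 2) F) : M2 F)) := by
  obtain ⟨h, hH, hd, hm⟩ := h
  obtain ⟨a, haH, ha⟩ := hred' N
  refine ⟨a * h * a⁻¹, H.mul_mem (H.mul_mem haH hH) (H.inv_mem haH), ?_, ?_⟩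
  · rw [Units.val_mul, Units.val_mul, Matrix.det_mul, Matrix.det_mul, hd, mul_one]
    have h1 := congrArg Matrix.det (a.mul_inv)
    rwa [Matrix.det_mul, Matrix.det_one] at h1
  · have h1 : Emod (i+1) ((a * h * a⁻¹ : GL (Fin 2) R) : M2 R)
        ((a : M2 R) * (1 + (X:R)^i • lf B) * ((a⁻¹ : GL (Fin 2) R) : M2 R)) := by
      rw [Units.val_mul, Units.val_mul]
      exact ((Emod.refl _ _).mul hm).mul (Emod.refl _ _)
    refine h1.trans ?_
    have e : (a : M2 R) * (1 + (X:R)^i • lf B) * ((a⁻¹ : GL (Fin 2) R) : M2 R)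
        = 1 + (X:R)^i • ((a : M2 R) * lf B * ((a⁻¹ : GL (Fin 2) R) : M2 R)) := by
      rw [mul_add, add_mul, mul_one, a.mul_inv, mul_smul_comm, smul_mul_assoc]
    rw [e]
    refine (emod_smul_rd i _).trans ?_
    have : rd ((a : M2 R) * lf B * ((a⁻¹ : GL (Fin 2) R) : M2 R))
        = (N : M2 F) * B * ((N⁻¹ : GL (Fin 2) F) : M2 F) := by
      rw [map_mul, map_mul, ha, rd_lf, rd_inv ha]
    rw [this]
    exact Emod.refl _ _

-- ### commutator congruences
set_option maxHeartbeats 1600000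
theorem rd_pow_smul {n : ℕ} (hn : 1 ≤ n) (D : M2 R) : rd ((X:R)^n • D) = 0 := by
  ext i j
  simp [rd_apply, Matrix.smul_apply, smul_eq_mul, map_mul, map_pow, constantCoeff_X,
    zero_pow (by omega : n ≠ 0)]

theorem rd_X_smul (D : M2 R) : rd ((X:R) • D) = 0 := by
  have := rd_pow_smul (le_refl 1) D
  rwa [pow_one] at this

theorem rd_inv_one {g : GL (Fin 2) R} (h : rd ((g : M2 R)) = 1) :
    rd (((g⁻¹ : GL (Fin 2) R)) : M2 R) = 1 := by
  have : rd ((g : M2 R)) = ((1 : GL (Fin 2) F) : M2 F) := by rw [h]; rfl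
  have h2 := rd_inv this
  rw [h2]; rfl

/-- main commutator congruence -/
theorem comm_emod {i : ℕ} (hi : 1 ≤ i) {h g : GL (Fin 2) R} {A Bm : M2 F}
    (hh : Emod 2 ((h : M2 R)) (1 + (X:R) • lf A))
    (hg : Emod (i+1) ((g : M2 R)) (1 + (X:R)^i • lf Bm)) :
    Emod (i+2) (((h * g * h⁻¹ * g⁻¹ : GL (Fin 2) R)) : M2 R)
      (1 + (X:R)^(i+1) • lf (A * Bm - Bm * A)) := by
  obtain ⟨D, hD⟩ := hh
  obtain ⟨E, hE⟩ := hg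
  set A' : M2 R := lf A + (X:R) • D with hA'
  set B' : M2 R := lf Bm + (X:R) • E with hB'
  have hhv : (h : M2 R) = 1 + (X:R) • A' := by
    rw [hD, hA', smul_add, smul_smul, add_assoc]; norm_num [pow_succ]
  have hgv : (g : M2 R) = 1 + (X:R)^i • B' := by
    rw [hE, hB', smul_add, smul_smul, add_assoc, ← pow_succ]
  have hrdA : rd A' = A := by rw [hA', map_add, rd_lf, rd_X_smul, add_zero]
  have hrdB : rd B' = Bm := by rw [hB', map_add, rd_lf, rd_X_smul, add_zero]
  have hrdh : rd ((h : M2 R)) = 1 := by rw [hhv, map_add, rd_one, rd_X_smul, add_zero]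
  have hrdg : rd ((g : M2 R)) = 1 := by
    rw [hgv, map_add, rd_one, rd_pow_smul hi, add_zero]
  have hp1 : (X:R) * (X:R)^i = (X:R)^(i+1) := by ring
  have hp2 : (X:R)^i * (X:R) = (X:R)^(i+1) := by ring
  have key : ((h * g : GL (Fin 2) R) : M2 R)
      = ((g * h : GL (Fin 2) R) : M2 R) + (X:R)^(i+1) • (A' * B' - B' * A') := by
    rw [Units.val_mul, Units.val_mul, hhv, hgv]
    apply Matrix.ext; intro i j
    fin_cases i <;> fin_cases j <;>
      simp [Matrix.mul_apply, Matrix.add_apply, Matrix.smul_apply, Matrix.one_apply,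
        Fin.sum_univ_two, Matrix.sub_apply, smul_eq_mul] <;> ring
  have hcomm : (h * g * h⁻¹ * g⁻¹ : GL (Fin 2) R) = (h * g) * ((g * h)⁻¹ : GL (Fin 2) R) := by
    rw [mul_inv_rev]; group
  have hval : ((h * g * h⁻¹ * g⁻¹ : GL (Fin 2) R) : M2 R)
      = 1 + (X:R)^(i+1) • ((A' * B' - B' * A') * (((g*h)⁻¹ : GL (Fin 2) R) : M2 R)) := by
    rw [hcomm, Units.val_mul, key, add_mul, (g*h).mul_inv, smul_mul_assoc]
  rw [hval]
  refine (emod_smul_rd (i+1) _).trans ?_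
  have hg1 : rd (((g*h : GL (Fin 2) R)) : M2 R) = 1 := by
    rw [Units.val_mul, map_mul, hrdh, hrdg, mul_one]
  have hrd : rd ((A' * B' - B' * A') * (((g*h)⁻¹ : GL (Fin 2) R) : M2 R))
      = A * Bm - Bm * A := by
    rw [map_mul, map_sub, map_mul, map_mul, hrdA, hrdB, rd_inv_one hg1, mul_one]
  rw [hrd]
  exact Emod.refl _ _

/-- level-0 commutator congruence -/
theorem comm0_emod {h a : GL (Fin 2) R} {A : M2 F} {N : GL (Fin 2) F}
    (hh : Emod 2 ((h : M2 R)) (1 + (X:R) • lf A))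
    (ha : rd ((a : M2 R)) = (N : M2 F)) :
    Emod 2 (((h * a * h⁻¹ * a⁻¹ : GL (Fin 2) R)) : M2 R)
      (1 + (X:R) • lf (A - (N : M2 F) * A * ((N⁻¹ : GL (Fin 2) F) : M2 F))) := by
  obtain ⟨D, hD⟩ := hh
  set A' : M2 R := lf A + (X:R) • D with hA'
  have hhv : (h : M2 R) = 1 + (X:R) • A' := by
    rw [hD, hA', smul_add, smul_smul, add_assoc]; norm_num [pow_succ]
  have hrdA : rd A' = A := by rw [hA', map_add, rd_lf, rd_X_smul, add_zero]
  have hrdh : rd ((h : M2 R)) = 1 := by rw [hhv, map_add, rd_one, rd_X_smul, add_zero]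
  have key : ((h * a : GL (Fin 2) R) : M2 R)
      = ((a * h : GL (Fin 2) R) : M2 R) + (X:R) • (A' * (a : M2 R) - (a : M2 R) * A') := by
    rw [Units.val_mul, Units.val_mul, hhv]
    apply Matrix.ext; intro i j
    fin_cases i <;> fin_cases j <;>
      simp [Matrix.mul_apply, Matrix.add_apply, Matrix.smul_apply, Matrix.one_apply,
        Fin.sum_univ_two, Matrix.sub_apply, smul_eq_mul] <;> ring
  have hcomm : (h * a * h⁻¹ * a⁻¹ : GL (Fin 2) R) = (h * a) * ((a * h)⁻¹ : GL (Fin 2) R) := by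
    rw [mul_inv_rev]; group
  have hval : ((h * a * h⁻¹ * a⁻¹ : GL (Fin 2) R) : M2 R)
      = 1 + (X:R) • ((A' * (a : M2 R) - (a : M2 R) * A') * (((a*h)⁻¹ : GL (Fin 2) R) : M2 R)) := by
    rw [hcomm, Units.val_mul, key, add_mul, (a*h).mul_inv, smul_mul_assoc]
  rw [hval]
  have hah : rd (((a*h : GL (Fin 2) R)) : M2 R) = (N : M2 F) := by
    rw [Units.val_mul, map_mul, ha, hrdh, mul_one]
  have hrd : rd ((A' * (a : M2 R) - (a : M2 R) * A') * (((a*h)⁻¹ : GL (Fin 2) R) : M2 R))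
      = A - (N : M2 F) * A * ((N⁻¹ : GL (Fin 2) F) : M2 F) := by
    rw [map_mul, map_sub, map_mul, map_mul, hrdA, ha, rd_inv hah]
    rw [sub_mul, mul_assoc A (N : M2 F) _, N.mul_inv, mul_one, mul_assoc]
  have base : Emod 2 (1 + (X:R)^1 • ((A' * (a : M2 R) - (a : M2 R) * A') * (((a*h)⁻¹ : GL (Fin 2) R) : M2 R)))
      (1 + (X:R)^1 • lf (A - (N : M2 F) * A * ((N⁻¹ : GL (Fin 2) F) : M2 F))) := by
    refine (emod_smul_rd 1 _).trans ?_
    rw [hrd]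
    exact Emod.refl _ _
  simpa using base

-- ### determinant and trace bookkeeping
theorem det_one_add_smul (r : R) (D : M2 R) :
    (1 + r • D).det = 1 + r * D.trace + r^2 * D.det := by
  rw [Matrix.det_fin_two, Matrix.det_fin_two, Matrix.trace_fin_two]
  simp [Matrix.add_apply, Matrix.smul_apply, Matrix.one_apply, smul_eq_mul]
  ring

theorem X_pow_ne_zero (n : ℕ) : (X:R)^n ≠ 0 := by
  apply pow_ne_zero
  exact X_ne_zero

theorem tr_of_det {j m : ℕ} (hj : 1 ≤ j) (hjm : j ≤ m) {D : M2 R} {t : F}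
    (hd : (1 + (X:R)^j • D).det = 1 + (@C F _) t * (X:R)^m) :
    (@constantCoeff F _) D.trace = if j = m then t else 0 := by
  rw [det_one_add_smul] at hd
  have key : D.trace + (X:R)^j * D.det = (@C F _) t * (X:R)^(m-j) := by
    have h1 : (X:R)^j * (D.trace + (X:R)^j * D.det) = (X:R)^j * ((@C F _) t * (X:R)^(m-j)) := by
      have hm' : (X:R)^m = (X:R)^j * (X:R)^(m-j) := by
        rw [← pow_add]; congr 1; omega
      rw [hm'] at hd
      ring_nf at hd ⊢
      linear_combination hd
    exact mul_left_cancel₀ (X_pow_ne_zero j) h1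
  have := congrArg ((@constantCoeff F _)) key
  rw [map_add, map_mul, map_mul, map_pow, constantCoeff_X, zero_pow (by omega : j ≠ 0),
    zero_mul, add_zero, constantCoeff_C] at this
  by_cases hc : j = m
  · subst hc
    simp only [Nat.sub_self, pow_zero, map_one, mul_one] at this
    rw [if_pos rfl]; exact this
  · rw [if_neg hc]
    rw [map_pow, constantCoeff_X, zero_pow (by omega : m - j ≠ 0), mul_zero] at this
    exact this

/-- units of the form 1 + C t X^m -/
noncomputable def oneAddUnit (t : F) (m : ℕ) (hm : 1 ≤ m) : Rˣ :=
  ⟨1 + (@C F _) t * (X:R)^m,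
   PowerSeries.invOfUnit (1 + (@C F _) t * (X:R)^m) 1,
   by
     apply PowerSeries.mul_invOfUnit
     simp [constantCoeff_X, zero_pow (by omega : m ≠ 0)],
   by
     rw [mul_comm]
     apply PowerSeries.mul_invOfUnit
     simp [constantCoeff_X, zero_pow (by omega : m ≠ 0)]⟩

@[simp] theorem oneAddUnit_val (t : F) (m : ℕ) (hm : 1 ≤ m) :
    ((oneAddUnit t m hm : Rˣ) : R) = 1 + (@C F _) t * (X:R)^m := rfl

-- ### perfect lifting
theorem perfect_lift {H : Subgroup (GL (Fin 2) R)} (hq : 4 ≤ Fintype.card F)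
    (hred' : ∀ N : GL (Fin 2) F, ∃ a ∈ H, rd ((a : GL (Fin 2) R) : M2 R) = (N : M2 F))
    (Nv : GL (Fin 2) F) (hNv : ((Nv : M2 F)).det = 1) :
    ∃ k ∈ H, (((k : GL (Fin 2) R)) : M2 R).det = 1 ∧ rd ((k : GL (Fin 2) R) : M2 R) = (Nv : M2 F) := by
  -- step 1: lift a single commutator
  have lift_comm : ∀ g : GL (Fin 2) F, (∃ x y : GL (Fin 2) F, g = x * y * x⁻¹ * y⁻¹) →
      ∃ k ∈ H, (((k : GL (Fin 2) R)) : M2 R).det = 1 ∧ rd ((k : GL (Fin 2) R) : M2 R) = (g : M2 F) := by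
    rintro g ⟨x, y, rfl⟩
    obtain ⟨a, haH, ha⟩ := hred' x
    obtain ⟨b, hbH, hb⟩ := hred' y
    refine ⟨a * b * a⁻¹ * b⁻¹,
      H.mul_mem (H.mul_mem (H.mul_mem haH hbH) (H.inv_mem haH)) (H.inv_mem hbH),
      det_commutator a b, ?_⟩
    rw [Units.val_mul, Units.val_mul, Units.val_mul, map_mul, map_mul, map_mul,
      ha, hb, rd_inv ha, rd_inv hb]
    rw [Units.val_mul, Units.val_mul, Units.val_mul]
  -- step 2: multiply
  obtain ⟨e1, e2, e3, e4, he1, he2, he3, he4, hprod⟩ := sl2_decomp Nv hNv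
  obtain ⟨k1, h1H, h1d, h1r⟩ := lift_comm e1 (elem_commutator hq e1 he1)
  obtain ⟨k2, h2H, h2d, h2r⟩ := lift_comm e2 (elem_commutator hq e2 he2)
  obtain ⟨k3, h3H, h3d, h3r⟩ := lift_comm e3 (elem_commutator hq e3 he3)
  obtain ⟨k4, h4H, h4d, h4r⟩ := lift_comm e4 (elem_commutator hq e4 he4)
  refine ⟨k1 * k2 * k3 * k4, H.mul_mem (H.mul_mem (H.mul_mem h1H h2H) h3H) h4H, ?_, ?_⟩
  · rw [Units.val_mul, Units.val_mul, Units.val_mul, Matrix.det_mul, Matrix.det_mul,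
      Matrix.det_mul, h1d, h2d, h3d, h4d]
    ring
  · rw [Units.val_mul, Units.val_mul, Units.val_mul, map_mul, map_mul, map_mul,
      h1r, h2r, h3r, h4r, hprod]
    rw [Units.val_mul, Units.val_mul, Units.val_mul]

-- ### more helpers
theorem emod_inv_one_add {i : ℕ} (hi : 1 ≤ i) {h : GL (Fin 2) R} {B : M2 F}
    (hm : Emod (i+1) ((h : M2 R)) (1 + (X:R)^i • lf B)) :
    Emod (i+1) (((h⁻¹ : GL (Fin 2) R)) : M2 R) (1 + (X:R)^i • lf (-B)) := by
  have e1 : Emod (i+1) ((h : M2 R) * (1 + (X:R)^i • lf (-B))) 1 := by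
    have h2 := hm.mul (Emod.refl (i+1) (1 + (X:R)^i • lf (-B)))
    refine h2.trans ?_
    refine (one_add_mul_expand hi (lf B) (lf (-B))).trans ?_
    have heq : lf B + lf (-B) = (0 : M2 R) := by rw [map_neg, add_neg_cancel]
    rw [heq]
    exact ⟨0, by simp⟩
  have e2 := (Emod.refl (i+1) ((h⁻¹ : GL (Fin 2) R) : M2 R)).mul e1
  rw [mul_one, ← mul_assoc, h.inv_mul, one_mul] at e2
  exact e2.symm

theorem lvl_add {H : Subgroup (GL (Fin 2) R)} {i : ℕ} (hi : 1 ≤ i) {B B' : M2 F}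
    (h : lvl H i B) (h' : lvl H i B') : lvl H i (B + B') := by
  obtain ⟨h, hH, hm⟩ := h
  obtain ⟨h', hH', hm'⟩ := h'
  refine ⟨h * h', H.mul_mem hH hH', ?_⟩
  have h1 : Emod (i+1) ((h * h' : GL (Fin 2) R) : M2 R)
      ((1 + (X:R)^i • lf B) * (1 + (X:R)^i • lf B')) := by
    rw [Units.val_mul]; exact hm.mul hm'
  refine h1.trans ?_
  have := one_add_mul_expand hi (lf B) (lf B')
  rwa [← map_add] at this

theorem one_add_comm_aux {n : ℕ} {D : M2 R} : (1 : M2 R) + (X:R)^n • D = 1 + (X:R)^n • D := rfl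

theorem rd_trace (D : M2 R) : (rd D).trace = (@constantCoeff F _) (D.trace) := by
  rw [Matrix.trace_fin_two, Matrix.trace_fin_two, map_add, rd_apply, rd_apply]

/-- the big induction -/
theorem good_all {H : Subgroup (GL (Fin 2) R)} (hq : 4 ≤ Fintype.card F)
    (hdet' : ∀ u : Rˣ, ∃ h ∈ H, (((h : GL (Fin 2) R)) : M2 R).det = (u : R))
    (hred' : ∀ N : GL (Fin 2) F, ∃ a ∈ H, rd ((a : GL (Fin 2) R) : M2 R) = (N : M2 F))
    (hA : ∃ A : M2 F, (¬∃ c : F, A = c • (1 : M2 F)) ∧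
      ∃ h ∈ H, Emod 2 ((h : GL (Fin 2) R) : M2 R) (1 + (X:R) • lf A)) :
    ∀ i, 1 ≤ i → (∀ B : M2 F, lvl H i B) ∧ (∀ B : M2 F, B.trace = 0 → lvlK H i B) := by
  intro i
  induction i using Nat.strong_induction_on with
  | _ i IH =>
  intro hi
  -- Part A : sl₂ inside lvlK
  have KSL : ∀ x y z : F, lvlK H i !![x, y; z, -x] := by
    rcases eq_or_lt_of_le hi with h1 | h2
    · -- i = 1
      subst h1
      obtain ⟨A, hAns, h, hH, hm⟩ := hA
      obtain ⟨N, hNns⟩ := ns_lemma hq A hAns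
      obtain ⟨a, haH, har⟩ := hred' N
      have base : lvlK H 1 (A - (N : M2 F) * A * ((N⁻¹ : GL (Fin 2) F) : M2 F)) := by
        refine ⟨h * a * h⁻¹ * a⁻¹,
          H.mul_mem (H.mul_mem (H.mul_mem hH haH) (H.inv_mem hH)) (H.inv_mem haH),
          det_commutator h a, ?_⟩
        have := comm0_emod hm har
        simpa [pow_one] using this
      exact absl hq (lvlK H 1)
        (fun hx hy => lvlK_add (le_refl 1) hx hy)
        (fun hx => lvlK_neg (le_refl 1) hx)
        (fun Nc {Bc} hB => lvlK_conj hred' Nc hB)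
        _ base hNns
    · -- i = j + 1 with j ≥ 1
      obtain ⟨j, rfl⟩ : ∃ j, i = j + 1 := ⟨i - 1, by omega⟩
      have hj : 1 ≤ j := by omega
      have G1 := IH 1 (by omega) (le_refl 1)
      have Gj := IH j (by omega) hj
      have CC : ∀ A1 B1 : M2 F, lvlK H (j+1) (A1 * B1 - B1 * A1) := by
        intro A1 B1
        obtain ⟨h, hH, hmh⟩ := G1.1 A1
        obtain ⟨g, hG, hmg⟩ := Gj.1 B1
        refine ⟨h * g * h⁻¹ * g⁻¹,
          H.mul_mem (H.mul_mem (H.mul_mem hH hG) (H.inv_mem hH)) (H.inv_mem hG),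
          det_commutator h g, ?_⟩
        have hmh' : Emod 2 ((h : M2 R)) (1 + (X:R) • lf A1) := by
          simpa [pow_one] using hmh
        exact comm_emod hj hmh' hmg
      intro x y z
      have S1 := CC !![0,x;0,0] !![0,0;1,0]
      have S2 := CC !![0,y;0,0] !![0,0;0,1]
      have S3 := CC !![0,0;0,1] !![0,0;z,0]
      have e1 : (!![0,x;0,0] * !![0,0;1,0] - !![0,0;1,0] * !![0,x;0,0] : M2 F)
          = !![x,0;0,-x] := by
        simp only [Matrix.mul_fin_two]
        ext i j; fin_cases i <;> fin_cases j <;> simp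
      have e2 : (!![0,y;0,0] * !![0,0;0,1] - !![0,0;0,1] * !![0,y;0,0] : M2 F)
          = !![0,y;0,0] := by
        simp only [Matrix.mul_fin_two]
        ext i j; fin_cases i <;> fin_cases j <;> simp
      have e3 : (!![0,0;0,1] * !![0,0;z,0] - !![0,0;z,0] * !![0,0;0,1] : M2 F)
          = !![0,0;z,0] := by
        simp only [Matrix.mul_fin_two]
        ext i j; fin_cases i <;> fin_cases j <;> simp
      rw [e1] at S1; rw [e2] at S2; rw [e3] at S3
      have S := lvlK_add (by omega) (lvlK_add (by omega) S1 S2) S3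
      have e4 : (!![x,0;0,-x] + !![0,y;0,0] + !![0,0;z,0] : M2 F) = !![x,y;z,-x] := by
        ext i j; fin_cases i <;> fin_cases j <;> simp
      rwa [e4] at S
  have KSL' : ∀ B : M2 F, B.trace = 0 → lvlK H i B := by
    intro B htr
    rw [Matrix.trace_fin_two] at htr
    have h11 : B 1 1 = -(B 0 0) := by linear_combination htr
    have := KSL (B 0 0) (B 0 1) (B 1 0)
    rwa [Matrix.eta_fin_two B, h11]
  refine ⟨?_, KSL'⟩
  -- Part B : full lvl via determinant
  intro B
  set t := B.trace with ht
  obtain ⟨h0, h0H, h0d⟩ := hdet' (oneAddUnit t i hi)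
  rw [oneAddUnit_val] at h0d
  have hrd_det : ((rd ((h0 : GL (Fin 2) R) : M2 R))).det = 1 := by
    rw [rd]
    rw [← RingHom.map_det, h0d]
    simp [constantCoeff_X, zero_pow (by omega : i ≠ 0)]
  obtain ⟨k0, k0H, k0d, k0r⟩ := perfect_lift hq hred' (mapGL h0) (by
    rw [mapGL_val]; exact hrd_det)
  have h1mem : h0 * k0⁻¹ ∈ H := H.mul_mem h0H (H.inv_mem k0H)
  have h1d : (((h0 * k0⁻¹ : GL (Fin 2) R)) : M2 R).det = 1 + (@C F _) t * (X:R)^i := by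
    rw [Units.val_mul, Matrix.det_mul, h0d, det_val_inv k0d, mul_one]
  have h1e : Emod 1 (((h0 * k0⁻¹ : GL (Fin 2) R)) : M2 R) 1 := by
    rw [emod_one_iff, rd_one, Units.val_mul, map_mul]
    have e0 : rd (((h0 : GL (Fin 2) R)) : M2 R) = ((mapGL h0 : GL (Fin 2) F) : M2 F) :=
      (mapGL_val h0).symm
    rw [e0, rd_inv k0r]
    exact_mod_cast (mapGL h0).mul_inv
  -- the correction loop
  have loop : ∀ j, 1 ≤ j → j ≤ i → ∃ hj, hj ∈ H ∧
      (((hj : GL (Fin 2) R)) : M2 R).det = 1 + (@C F _) t * (X:R)^i ∧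
      Emod j ((hj : GL (Fin 2) R) : M2 R) 1 := by
    intro j
    induction j with
    | zero => omega
    | succ j IHj =>
      intro _ hle
      by_cases hj0 : j = 0
      · subst hj0
        exact ⟨h0 * k0⁻¹, h1mem, h1d, h1e⟩
      · have hj1 : 1 ≤ j := by omega
        obtain ⟨hj', hjH, hjd, hje⟩ := IHj hj1 (by omega)
        obtain ⟨D, hD⟩ := hje
        rw [one_add_comm_aux] at hD
        have hdet2 : (1 + (X:R)^j • D).det = 1 + (@C F _) t * (X:R)^i := by
          rw [← hD]; exact hjd
        have htr0 : ((rd D)).trace = 0 := by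
          rw [rd_trace]
          have := tr_of_det hj1 (by omega : j ≤ i) hdet2
          rwa [if_neg (by omega : j ≠ i)] at this
        obtain ⟨kj, kjH, kjd, kje⟩ := (IH j (by omega) hj1).2 (rd D) htr0
        have kinv := emod_inv_one_add hj1 kje
        have hDlf : Emod 1 D (lf (rd D)) := by rw [emod_one_iff, rd_lf]
        obtain ⟨E, hE⟩ := hDlf
        have h0 : Emod 1 (D + lf (-(rd D))) 0 :=
          ⟨E, by rw [map_neg, zero_add, pow_one]; nth_rewrite 1 [hE]; rw [pow_one]; abel⟩
        have step1 : Emod (j+1) (((hj' * kj⁻¹ : GL (Fin 2) R)) : M2 R)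
            ((1 + (X:R)^j • D) * (1 + (X:R)^j • lf (-(rd D)))) := by
          rw [Units.val_mul, hD]
          exact (Emod.refl _ _).mul kinv
        refine ⟨hj' * kj⁻¹, H.mul_mem hjH (H.inv_mem kjH), ?_, ?_⟩
        · rw [Units.val_mul, Matrix.det_mul, hjd, det_val_inv kjd, mul_one]
        · exact step1.trans ((one_add_mul_expand hj1 D (lf (-(rd D)))).trans
            (emod_one_add_high h0))
  obtain ⟨hs, hsH, hsd, hse⟩ := loop i hi (le_refl i)
  obtain ⟨Ds, hDs⟩ := hse
  rw [one_add_comm_aux] at hDs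
  have hdet2 : (1 + (X:R)^i • Ds).det = 1 + (@C F _) t * (X:R)^i := by
    rw [← hDs]; exact hsd
  have htr : ((rd Ds)).trace = t := by
    rw [rd_trace]
    have := tr_of_det hi (le_refl i) hdet2
    rwa [if_pos rfl] at this
  have lvlDs : lvl H i (rd Ds) := ⟨hs, hsH, by rw [hDs]; exact emod_smul_rd i _⟩
  have hdiff : (B - rd Ds).trace = 0 := by
    rw [Matrix.trace_sub, htr, ht]; ring
  have final := lvl_add hi (lvl_of_lvlK (KSL' _ hdiff)) lvlDs
  rwa [sub_add_cancel] at final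

theorem scalar_smul_one (r : R) :
    (Matrix.scalar (Fin 2)) r = r • (1 : M2 R) := by
  rw [Matrix.scalar_apply]
  ext i j
  by_cases h : i = j <;>
    simp [Matrix.diagonal_apply, Matrix.smul_apply, Matrix.one_apply, h]

/-- approximation: every element of the principal congruence subgroup is approximable -/
theorem approx {H : Subgroup (GL (Fin 2) R)}
    (good : ∀ i, 1 ≤ i → (∀ B : M2 F, lvl H i B)) :
    ∀ n (g : GL (Fin 2) R), Emod 1 ((g : M2 R)) 1 →
      ∃ h' ∈ H, Emod n ((g : M2 R)) ((h' : GL (Fin 2) R) : M2 R) := by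
  intro n
  induction n with
  | zero =>
    intro g _
    refine ⟨1, H.one_mem, ⟨(g : M2 R) - 1, ?_⟩⟩
    rw [pow_zero, one_smul]
    show (g : M2 R) = ((1 : GL (Fin 2) R) : M2 R) + _
    have : ((1 : GL (Fin 2) R) : M2 R) = 1 := rfl
    rw [this]; abel
  | succ n IHn =>
    intro g hg
    by_cases hn : n = 0
    · subst hn
      exact ⟨1, H.one_mem, by simpa using hg⟩
    · have hn1 : 1 ≤ n := by omega
      obtain ⟨h', hH', hm⟩ := IHn g hg
      have e : Emod n ((g : M2 R) * ((h'⁻¹ : GL (Fin 2) R) : M2 R)) 1 := by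
        have := hm.mul (Emod.refl n ((h'⁻¹ : GL (Fin 2) R) : M2 R))
        rwa [h'.mul_inv] at this
      obtain ⟨D, hD⟩ := e
      rw [one_add_comm_aux] at hD
      obtain ⟨h'', hH'', hm''⟩ := good n hn1 (rd D)
      refine ⟨h'' * h', H.mul_mem hH'' hH', ?_⟩
      have hgdec : (g : M2 R) = ((g : M2 R) * ((h'⁻¹ : GL (Fin 2) R) : M2 R)) * ((h' : M2 R)) := by
        rw [mul_assoc, h'.inv_mul, mul_one]
      rw [hgdec, hD, Units.val_mul]
      have e2 : Emod (n+1) (1 + (X:R)^n • D) ((h'' : M2 R)) :=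
        (emod_smul_rd n D).trans hm''.symm
      exact e2.mul (Emod.refl _ _)

theorem rd_eq_map (A : M2 R) : rd A = A.map ((@constantCoeff F _)) := rfl

end PR

open PowerSeries

/-- Pink–Rütsche surjectivity criterion for `GL₂` over the complete discrete valuation ring
`R = F_q[[π]]` (with `π = X`), `q ≥ 4`.  `H` is a closed subgroup of `GL₂(R)` (closedness in
the `π`-adic topology is expressed concretely: any matrix approximable modulo every power
`π^n` by elements of `H` belongs to `H`).  If `det H = Rˣ`, the reduction of `H` modulo `π`
is all of `GL₂(F_q)`, and the image of `H ∩ (1 + π M₂(R))` in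
`(1 + π M₂(R))/(1 + π² M₂(R))` contains a non-scalar element, then `H = GL₂(R)`. -/
theorem closed_subgroup_eq_top (F : Type*) [Field F] [Fintype F]
    (hq : 4 ≤ Fintype.card F)
    (H : Subgroup (GL (Fin 2) (PowerSeries F)))
    (hclosed : ∀ M : GL (Fin 2) (PowerSeries F),
      (∀ n : ℕ, ∃ h ∈ H, ∀ i j : Fin 2, (X : PowerSeries F) ^ n ∣
        ((h : Matrix (Fin 2) (Fin 2) (PowerSeries F)) i j
          - (M : Matrix (Fin 2) (Fin 2) (PowerSeries F)) i j)) → M ∈ H)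
    (hdet : ∀ u : (PowerSeries F)ˣ, ∃ h ∈ H,
      (h : Matrix (Fin 2) (Fin 2) (PowerSeries F)).det = (u : PowerSeries F))
    (hred : ∀ N : GL (Fin 2) F, ∃ h ∈ H,
      (h : Matrix (Fin 2) (Fin 2) (PowerSeries F)).map ((@constantCoeff F _))
        = (N : Matrix (Fin 2) (Fin 2) F))
    (hns : ∃ h ∈ H,
      (∀ i j : Fin 2, (X : PowerSeries F) ∣
        ((h : Matrix (Fin 2) (Fin 2) (PowerSeries F)) i j
          - (1 : Matrix (Fin 2) (Fin 2) (PowerSeries F)) i j)) ∧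
      ¬ ∃ c : PowerSeries F, ∀ i j : Fin 2, (X : PowerSeries F) ^ 2 ∣
        ((h : Matrix (Fin 2) (Fin 2) (PowerSeries F)) i j
          - (((1 : Matrix (Fin 2) (Fin 2) (PowerSeries F))
              + Matrix.scalar (Fin 2) (X * c) : Matrix (Fin 2) (Fin 2) (PowerSeries F))) i j)) :
    H = ⊤ := by
  classical
  -- translate the reduction hypothesis
  have hred' : ∀ N : GL (Fin 2) F, ∃ a ∈ H,
      PR.rd ((a : GL (Fin 2) (PowerSeries F)) : Matrix (Fin 2) (Fin 2) (PowerSeries F))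
        = (N : Matrix (Fin 2) (Fin 2) F) := by
    intro N
    obtain ⟨a, haH, ha⟩ := hred N
    exact ⟨a, haH, by rw [PR.rd_eq_map]; exact ha⟩
  -- translate the non-scalar hypothesis
  obtain ⟨h, hH, hdvd, hnsc⟩ := hns
  have hEm : PR.Emod 1 ((h : GL (Fin 2) (PowerSeries F)) : Matrix (Fin 2) (Fin 2) (PowerSeries F)) 1 :=
    PR.emod_iff_dvd.mpr (fun i j => by rw [pow_one]; exact hdvd i j)
  obtain ⟨D, hD⟩ := hEm
  rw [PR.one_add_comm_aux] at hD
  have hA : ∃ A : Matrix (Fin 2) (Fin 2) F, (¬∃ c : F, A = c • (1 : Matrix (Fin 2) (Fin 2) F)) ∧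
      ∃ h ∈ H, PR.Emod 2 ((h : GL (Fin 2) (PowerSeries F)) : Matrix (Fin 2) (Fin 2) (PowerSeries F))
        (1 + (X : PowerSeries F) • PR.lf A) := by
    refine ⟨PR.rd D, ?_, h, hH, ?_⟩
    · rintro ⟨cF, hc⟩
      apply hnsc
      refine ⟨(@C F _) cF, ?_⟩
      have hrdc : PR.rd (((@C F _) cF) • (1 : Matrix (Fin 2) (Fin 2) (PowerSeries F)))
          = cF • (1 : Matrix (Fin 2) (Fin 2) F) := by
        ext i j
        by_cases hij : i = j <;>
          simp [PR.rd_apply, Matrix.smul_apply, Matrix.one_apply, hij]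
      have hcD : PR.Emod 1 D (((@C F _) cF) • (1 : Matrix (Fin 2) (Fin 2) (PowerSeries F))) := by
        rw [PR.emod_one_iff, hrdc]; exact hc
      obtain ⟨E, hE⟩ := hcD
      have key : ((h : GL (Fin 2) (PowerSeries F)) : Matrix (Fin 2) (Fin 2) (PowerSeries F))
          - ((1 : Matrix (Fin 2) (Fin 2) (PowerSeries F))
              + (Matrix.scalar (Fin 2)) ((X : PowerSeries F) * (@C F _) cF))
          = (X : PowerSeries F)^2 • E := by
        rw [hD, hE, PR.scalar_smul_one, pow_one, smul_add, smul_smul, smul_smul]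
        have hxx : (X : PowerSeries F) * (X : PowerSeries F) = (X : PowerSeries F)^2 := by ring
        rw [hxx]
        abel
      intro i j
      have h2 : ((h : GL (Fin 2) (PowerSeries F)) : Matrix (Fin 2) (Fin 2) (PowerSeries F)) i j
          - ((1 : Matrix (Fin 2) (Fin 2) (PowerSeries F))
              + (Matrix.scalar (Fin 2)) ((X : PowerSeries F) * (@C F _) cF)) i j
          = (X : PowerSeries F)^2 * E i j := by
        have h3 := congrFun (congrFun key i) j
        simpa [Matrix.sub_apply, Matrix.smul_apply, smul_eq_mul] using h3
      exact ⟨E i j, h2⟩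
    · rw [hD]
      have := PR.emod_smul_rd (F := F) 1 D
      simpa [pow_one] using this
  -- the main induction
  have good := PR.good_all hq hdet hred' hA
  have approx' := PR.approx (fun i hi => (good i hi).1)
  -- conclude
  rw [Subgroup.eq_top_iff']
  intro M
  apply hclosed M
  intro n
  obtain ⟨a, haH, har⟩ := hred' (PR.mapGL M)
  have hg1 : PR.Emod 1 (((M * a⁻¹ : GL (Fin 2) (PowerSeries F))) : Matrix (Fin 2) (Fin 2) (PowerSeries F)) 1 := by
    rw [PR.emod_one_iff, PR.rd_one, Units.val_mul, map_mul]
    have e0 : PR.rd ((M : GL (Fin 2) (PowerSeries F)) : Matrix (Fin 2) (Fin 2) (PowerSeries F))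
        = ((PR.mapGL M : GL (Fin 2) F) : Matrix (Fin 2) (Fin 2) F) := (PR.mapGL_val M).symm
    rw [e0, PR.rd_inv har]
    exact_mod_cast (PR.mapGL M).mul_inv
  obtain ⟨h', hH', hm⟩ := approx' n (M * a⁻¹) hg1
  refine ⟨h' * a, H.mul_mem hH' haH, ?_⟩
  have hMdec : ((M : GL (Fin 2) (PowerSeries F)) : Matrix (Fin 2) (Fin 2) (PowerSeries F))
      = (((M * a⁻¹ : GL (Fin 2) (PowerSeries F))) : Matrix (Fin 2) (Fin 2) (PowerSeries F))
        * ((a : GL (Fin 2) (PowerSeries F)) : Matrix (Fin 2) (Fin 2) (PowerSeries F)) := by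
    rw [← Units.val_mul]
    congr 1
    group
  have final : PR.Emod n (((h' * a : GL (Fin 2) (PowerSeries F))) : Matrix (Fin 2) (Fin 2) (PowerSeries F))
      ((M : GL (Fin 2) (PowerSeries F)) : Matrix (Fin 2) (Fin 2) (PowerSeries F)) := by
    rw [hMdec, Units.val_mul]
    exact (hm.symm).mul (PR.Emod.refl _ _)
  exact PR.emod_iff_dvd.mp final
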